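/- Consider the Interaction 7 guiding system F : ℝ² → ℝ², F(Σ,Ω) = ((3/2)·Σ·(−γ(Σ²+Ω²−1)+2Σ²+Ω²−2), (3/2)·Ω·(−γΣ² + γ − Ω²·(γ+m−1) − mΣ² + m + 2Σ² − 1)), with parameters γ ∈ [0,2] and m ∈ ℝ. Then (0,1) is an equilibrium point, the Jacobian matrix of F at (0,1) is the diagonal matrix with diagonal entries −3/2 and −3(γ+m−1), and both entries are negative if and only if γ + m > 1 (so (0,1) is a hyperbolic sink exactly for γ + m > 1). -/

import Mathlib

/-- Interaction 7 guiding system: `(0,1)` is an equilibrium, its Jacobian is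
`diag(−3/2, −3(γ+m−1))`, and both eigenvalues are negative iff `γ + m > 1`
(hyperbolic sink exactly then). -/
theorem interaction7_scalar_field_point_stability
    (γ m : ℝ) (hγ0 : 0 ≤ γ) (hγ2 : γ ≤ 2)
    (F : ℝ × ℝ → ℝ × ℝ)
    (hF : ∀ p : ℝ × ℝ, F p =
      ((3 / 2) * p.1 * (-γ * (p.1 ^ 2 + p.2 ^ 2 - 1) + 2 * p.1 ^ 2 + p.2 ^ 2 - 2),
       (3 / 2) * p.2 * (-γ * p.1 ^ 2 + γ - p.2 ^ 2 * (γ + m - 1)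
         - m * p.1 ^ 2 + m + 2 * p.1 ^ 2 - 1))) :
    F (0, 1) = (0, 0) ∧
    HasFDerivAt F
      (((-3 / 2 : ℝ) • ContinuousLinearMap.id ℝ ℝ).prodMap
        ((-3 * (γ + m - 1)) • ContinuousLinearMap.id ℝ ℝ)) (0, 1) ∧
    (((-3 / 2 : ℝ) < 0 ∧ -3 * (γ + m - 1) < 0) ↔ γ + m > 1) := by
  have hFe : F = fun p : ℝ × ℝ =>
      ((3 / 2) * p.1 * (-γ * (p.1 * p.1 + p.2 * p.2 - 1) + 2 * (p.1 * p.1) + p.2 * p.2 - 2),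
       (3 / 2) * p.2 * (-γ * (p.1 * p.1) + γ - p.2 * p.2 * (γ + m - 1)
         - m * (p.1 * p.1) + m + 2 * (p.1 * p.1) - 1)) :=
    funext fun p => by rw [hF]; exact Prod.ext (by ring) (by ring)
  refine ⟨by rw [hF]; norm_num; ring, ?_, ?_⟩
  · rw [hFe]
    have hfst : HasFDerivAt (fun p : ℝ × ℝ => p.1)
        (ContinuousLinearMap.fst ℝ ℝ ℝ) ((0:ℝ), (1:ℝ)) := hasFDerivAt_fst
    have hsnd : HasFDerivAt (fun p : ℝ × ℝ => p.2)
        (ContinuousLinearMap.snd ℝ ℝ ℝ) ((0:ℝ), (1:ℝ)) := hasFDerivAt_snd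
    have d1 := (hfst.const_mul (3/2)).mul
      (((((((hfst.mul hfst).add (hsnd.mul hsnd)).sub
        (hasFDerivAt_const (1:ℝ) ((0:ℝ),(1:ℝ)))).const_mul (-γ)).add
        ((hfst.mul hfst).const_mul 2)).add (hsnd.mul hsnd)).sub
        (hasFDerivAt_const (2:ℝ) ((0:ℝ),(1:ℝ))))
    have d2 := (hsnd.const_mul (3/2)).mul
      ((((((((hfst.mul hfst).const_mul (-γ)).add
        (hasFDerivAt_const γ ((0:ℝ),(1:ℝ)))).sub
        ((hsnd.mul hsnd).mul_const (γ + m - 1))).sub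
        ((hfst.mul hfst).const_mul m)).add
        (hasFDerivAt_const m ((0:ℝ),(1:ℝ)))).add
        ((hfst.mul hfst).const_mul 2)).sub
        (hasFDerivAt_const (1:ℝ) ((0:ℝ),(1:ℝ))))
    have h := HasFDerivAt.prodMk d1 d2
    refine h.congr_fderiv ?_
    refine ContinuousLinearMap.ext fun p => ?_
    obtain ⟨x, y⟩ := p
    simp [Prod.map, Prod.ext_iff, ContinuousLinearMap.smul_apply]
    constructor <;> ring
  · constructor
    · rintro ⟨-, h2⟩; nlinarith
    · intro h; exact ⟨by norm_num, by nlinarith⟩
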